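/- For any finite set A with |A| ≥ 2, distinguished element a₀ ∈ A, and any d < |A| − 1: there is no function Ans : (queries : adaptive d-round strategy over A) with fewer than |A| − d − 1 total queried elements per run that determines f^{d+1}(a₀) for all total f : A → A. Concretely: for every adaptive d-round strategy that in each round queries a set of elements of A (asking for the full value f(x) at each queried x), with total queries over all rounds < |A| − d − 1, there exist total functions f, g : A → A giving identical answers to the strategy but with f^{d+1}(a₀) ≠ g^{d+1}(a₀). -/

import Mathlib

/-- Answers accumulated by an adaptive query strategy `Q` against a total function
`f : A → A` after `k` rounds, as a partial function `A ⇀ A`: `Q k a` is the finite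
set of elements queried in round `k` (which may depend on the answers `a` received
in earlier rounds), and a queried `x` is answered with the full value `f x`. -/
def accAnsA {A : Type} [DecidableEq A] (f : A → A)
    (Q : ℕ → (A → Option A) → Finset A) : ℕ → A → Option A
  | 0 => fun _ => none
  | k + 1 => fun x =>
      if x ∈ Q k (accAnsA f Q k) then some (f x) else accAnsA f Q k x

namespace Stmt19

variable {A : Type} [Fintype A] [DecidableEq A]

def usedF (Q : ℕ → (A → Option A) → Finset A) (k : ℕ)
    (s : (A → Option A) × A × List A) : Finset A :=
  (Finset.univ.filter fun x => (s.1 x).isSome) ∪ Q k s.1 ∪ (s.2.1 :: s.2.2).toFinset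

noncomputable def frF (Q : ℕ → (A → Option A) → Finset A) (k : ℕ)
    (s : (A → Option A) × A × List A) : A :=
  if h : ((usedF Q k s)ᶜ : Finset A).Nonempty then h.choose else s.2.1

lemma frF_spec {Q : ℕ → (A → Option A) → Finset A} {k : ℕ}
    {s : (A → Option A) × A × List A} (h : ((usedF Q k s)ᶜ : Finset A).Nonempty) :
    frF Q k s ∉ usedF Q k s := by
  rw [frF, dif_pos h]
  have := h.choose_spec
  simpa using this

noncomputable def step (Q : ℕ → (A → Option A) → Finset A) (k : ℕ)
    (s : (A → Option A) × A × List A) : (A → Option A) × A × List A :=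
  (fun x => if x ∈ Q k s.1 then
      some ((s.1 x).getD (if x = s.2.1 then frF Q k s else x)) else s.1 x,
   if s.2.1 ∈ Q k s.1 then (frF Q k s, s.2.1 :: s.2.2) else (s.2.1, s.2.2))

noncomputable def adv (a₀ : A) (Q : ℕ → (A → Option A) → Finset A) :
    ℕ → (A → Option A) × A × List A
  | 0 => (fun _ => none, a₀, [])
  | k + 1 => step Q k (adv a₀ Q k)

lemma adv_succ (a₀ : A) (Q : ℕ → (A → Option A) → Finset A) (k : ℕ) :
    adv a₀ Q (k + 1) = step Q k (adv a₀ Q k) := rfl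

lemma mono1 (a₀ : A) (Q : ℕ → (A → Option A) → Finset A) (k : ℕ) {x : A} {v : A}
    (h : (adv a₀ Q k).1 x = some v) : (adv a₀ Q (k + 1)).1 x = some v := by
  show (step Q k (adv a₀ Q k)).1 x = some v
  simp only [step]
  split
  · simp [h]
  · exact h

lemma mono (a₀ : A) (Q : ℕ → (A → Option A) → Finset A) {k k' : ℕ} (hkk : k ≤ k')
    {x : A} {v : A} (h : (adv a₀ Q k).1 x = some v) : (adv a₀ Q k').1 x = some v := by
  induction k' with
  | zero => exact Nat.le_zero.mp hkk ▸ h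
  | succ n ih =>
    rcases Nat.lt_or_ge k (n+1) with h1 | h1
    · exact mono1 a₀ Q n (ih (by omega))
    · have : k = n + 1 := by omega
      exact this ▸ h

/-- domain of the partial answer function after k rounds -/
noncomputable def dom (a₀ : A) (Q : ℕ → (A → Option A) → Finset A) (k : ℕ) : Finset A :=
  Finset.univ.filter fun x => ((adv a₀ Q k).1 x).isSome

lemma mem_dom {a₀ : A} {Q : ℕ → (A → Option A) → Finset A} {k : ℕ} {x : A} :
    x ∈ dom a₀ Q k ↔ (adv a₀ Q k).1 x ≠ none := by
  simp [dom, Option.isSome_iff_ne_none]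

lemma dom_mono (a₀ : A) (Q : ℕ → (A → Option A) → Finset A) {k k' : ℕ} (hkk : k ≤ k') :
    dom a₀ Q k ⊆ dom a₀ Q k' := by
  intro x hx
  rw [mem_dom] at hx ⊢
  obtain ⟨v, hv⟩ := Option.ne_none_iff_exists'.mp hx
  rw [mono a₀ Q hkk hv]
  simp

/-- consistency: any total function extending the final partial answers
produces exactly the adversary's answers in every round. -/
lemma consist (a₀ : A) (Q : ℕ → (A → Option A) → Finset A) (d : ℕ) (f : A → A)
    (hf : ∀ x v, (adv a₀ Q d).1 x = some v → f x = v) :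
    ∀ k, k ≤ d → accAnsA f Q k = (adv a₀ Q k).1 := by
  intro k
  induction k with
  | zero => intro _; funext x; rfl
  | succ k ih =>
    intro hkd
    have ihe := ih (by omega)
    funext x
    show (if x ∈ Q k (accAnsA f Q k) then some (f x) else accAnsA f Q k x) = _
    rw [ihe]
    by_cases hx : x ∈ Q k (adv a₀ Q k).1
    · rw [if_pos hx]
      have h2 : (adv a₀ Q (k+1)).1 x
          = some (((adv a₀ Q k).1 x).getD
              (if x = (adv a₀ Q k).2.1 then frF Q k (adv a₀ Q k) else x)) := by
        show (step Q k (adv a₀ Q k)).1 x = _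
        simp only [step, if_pos hx]
      have h3 := mono a₀ Q hkd h2
      rw [hf x _ h3] at *
      exact h2.symm
    · rw [if_neg hx]
      show _ = (step Q k (adv a₀ Q k)).1 x
      simp only [step, if_neg hx]

/-- chain length bound -/
lemma len_bound (a₀ : A) (Q : ℕ → (A → Option A) → Finset A) :
    ∀ k, ((adv a₀ Q k).2.1 :: (adv a₀ Q k).2.2).length ≤ k + 1 := by
  intro k
  induction k with
  | zero => simp [adv]
  | succ k ih =>
    show ((step Q k (adv a₀ Q k)).2.1 :: (step Q k (adv a₀ Q k)).2.2).length ≤ k + 2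
    simp only [step, List.length_cons] at ih ⊢
    split <;> simp only [List.length_cons] <;> omega

lemma used_subset (a₀ : A) (Q : ℕ → (A → Option A) → Finset A) (k : ℕ) :
    usedF Q k (adv a₀ Q k) ⊆ dom a₀ Q (k+1) ∪
      ((adv a₀ Q k).2.1 :: (adv a₀ Q k).2.2).toFinset := by
  intro x hx
  simp only [usedF, Finset.mem_union] at hx
  rcases hx with (hx | hx) | hx
  · simp only [Finset.mem_filter, Finset.mem_univ, true_and] at hx
    obtain ⟨v, hv⟩ := Option.isSome_iff_exists.mp hx
    exact Finset.mem_union_left _ (dom_mono a₀ Q (Nat.le_succ k) (mem_dom.mpr (by simp [hv])))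
  · refine Finset.mem_union_left _ ?_
    rw [mem_dom]
    show (step Q k (adv a₀ Q k)).1 x ≠ none
    simp only [step, if_pos hx]
    simp
  · exact Finset.mem_union_right _ hx

/-- nonemptiness of the fresh pool at every round, given the final-domain bound -/
lemma pool_nonempty (a₀ : A) (Q : ℕ → (A → Option A) → Finset A) (d : ℕ)
    (hD : (dom a₀ Q d).card + (d + 1) < Fintype.card A) {k : ℕ} (hk : k + 1 ≤ d) :
    ((usedF Q k (adv a₀ Q k))ᶜ : Finset A).Nonempty := by
  have h1 : (usedF Q k (adv a₀ Q k)).card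
      ≤ (dom a₀ Q d).card + (k + 1) := by
    calc (usedF Q k (adv a₀ Q k)).card
        ≤ (dom a₀ Q (k+1) ∪ ((adv a₀ Q k).2.1 :: (adv a₀ Q k).2.2).toFinset).card :=
          Finset.card_le_card (used_subset a₀ Q k)
      _ ≤ (dom a₀ Q (k+1)).card + ((adv a₀ Q k).2.1 :: (adv a₀ Q k).2.2).toFinset.card :=
          Finset.card_union_le _ _
      _ ≤ (dom a₀ Q d).card + (k + 1) := by
          refine Nat.add_le_add (Finset.card_le_card (dom_mono a₀ Q hk)) ?_
          exact le_trans (List.toFinset_card_le _) (len_bound a₀ Q k)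
  rw [← Finset.card_pos, Finset.card_compl]
  omega

omit [Fintype A] [DecidableEq A] in
/-- Tail elements of the chain all have answers. -/
lemma chain_tail_some {β : A → Option A} :
    ∀ (l : List A) (c : A), List.Chain' (fun x y => β y = some x) (c :: l) →
      ∀ y ∈ l, β y ≠ none := by
  intro l
  induction l with
  | nil => simp
  | cons b t ih =>
    intro c hch y hy
    simp only [List.Chain', List.isChain_cons_cons] at hch
    rcases List.mem_cons.mp hy with h | h
    · rw [h, hch.1]; simp
    · exact ih b hch.2 y h

/-- The main invariant of the adversary state. -/
lemma inv (a₀ : A) (Q : ℕ → (A → Option A) → Finset A) (d : ℕ)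
    (hD : (dom a₀ Q d).card + (d + 1) < Fintype.card A) :
    ∀ k, k ≤ d →
      (adv a₀ Q k).1 (adv a₀ Q k).2.1 = none ∧
      List.Chain' (fun x y => (adv a₀ Q k).1 y = some x)
        ((adv a₀ Q k).2.1 :: (adv a₀ Q k).2.2) ∧
      ((adv a₀ Q k).2.1 :: (adv a₀ Q k).2.2).Nodup ∧
      (∃ u : List A, (adv a₀ Q k).2.1 :: (adv a₀ Q k).2.2 = u ++ [a₀]) := by
  intro k
  induction k with
  | zero =>
    intro _
    refine ⟨rfl, ?_, ?_, ⟨[], rfl⟩⟩ <;> simp [adv, List.Chain', List.isChain_singleton]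
  | succ k ih =>
    intro hkd
    obtain ⟨hhead, hchain, hnodup, u, hu⟩ := ih (by omega)
    have hne := pool_nonempty a₀ Q d hD hkd
    have hfr := frF_spec hne
    simp only [usedF, Finset.mem_union, not_or] at hfr
    obtain ⟨⟨hfr1, hfr2⟩, hfr3⟩ := hfr
    have hfr1' : (adv a₀ Q k).1 (frF Q k (adv a₀ Q k)) = none := by
      rw [← Option.not_isSome_iff_eq_none]
      intro hsome
      exact hfr1 (by simp [hsome])
    have hmono' : ∀ x v, (adv a₀ Q k).1 x = some v → (adv a₀ Q (k+1)).1 x = some v :=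
      fun x v h => mono1 a₀ Q k h
    rw [adv_succ]
    show (step Q k (adv a₀ Q k)).1 ((step Q k (adv a₀ Q k)).2.1) = none ∧ _
    by_cases hc : (adv a₀ Q k).2.1 ∈ Q k (adv a₀ Q k).1
    · have h2 : (step Q k (adv a₀ Q k)).2
          = (frF Q k (adv a₀ Q k), (adv a₀ Q k).2.1 :: (adv a₀ Q k).2.2) := by
        simp only [step, if_pos hc]
      have h1 : ∀ x, (step Q k (adv a₀ Q k)).1 x
          = if x ∈ Q k (adv a₀ Q k).1 then
              some (((adv a₀ Q k).1 x).getD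
                (if x = (adv a₀ Q k).2.1 then frF Q k (adv a₀ Q k) else x))
            else (adv a₀ Q k).1 x := fun x => rfl
      rw [h2]
      refine ⟨?_, ?_, ?_, ?_⟩
      · show (step Q k (adv a₀ Q k)).1 (frF Q k (adv a₀ Q k)) = none
        rw [h1, if_neg hfr2]
        exact hfr1'
      · show List.Chain' _ (frF Q k (adv a₀ Q k) :: (adv a₀ Q k).2.1 :: (adv a₀ Q k).2.2)
        simp only [List.Chain', List.isChain_cons_cons]
        constructor
        · show (step Q k (adv a₀ Q k)).1 (adv a₀ Q k).2.1 = some (frF Q k (adv a₀ Q k))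
          rw [h1, if_pos hc, if_pos rfl, hhead]
          rfl
        · refine List.IsChain.imp ?_ hchain
          intro a b hab
          show (step Q k (adv a₀ Q k)).1 b = some a
          exact hmono' b a hab
      · show (frF Q k (adv a₀ Q k) :: (adv a₀ Q k).2.1 :: (adv a₀ Q k).2.2).Nodup
        rw [List.nodup_cons]
        exact ⟨by simpa using hfr3, hnodup⟩
      · exact ⟨frF Q k (adv a₀ Q k) :: u, by rw [hu]; rfl⟩
    · have h2 : (step Q k (adv a₀ Q k)).2 = ((adv a₀ Q k).2.1, (adv a₀ Q k).2.2) := by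
        simp only [step, if_neg hc]
      have h1 : ∀ x, (step Q k (adv a₀ Q k)).1 x
          = if x ∈ Q k (adv a₀ Q k).1 then
              some (((adv a₀ Q k).1 x).getD
                (if x = (adv a₀ Q k).2.1 then frF Q k (adv a₀ Q k) else x))
            else (adv a₀ Q k).1 x := fun x => rfl
      rw [h2]
      refine ⟨?_, ?_, ?_, ⟨u, hu⟩⟩
      · show (step Q k (adv a₀ Q k)).1 (adv a₀ Q k).2.1 = none
        rw [h1, if_neg hc]
        exact hhead
      · refine List.IsChain.imp ?_ hchain
        intro a b hab
        exact hmono' b a hab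
      · exact hnodup

end Stmt19

/-- combinatorial core of Theorem 3: over a finite set `A` with
`|A| ≥ 2`, distinguished element `a₀`, and `d < |A| − 1`, no adaptive `d`-round
query strategy that queries fewer than `|A| − d − 1` elements in total on every run
determines `f^{d+1}(a₀)` for all total `f : A → A`: there exist `f, g : A → A`
giving identical answers to the strategy but with `f^{d+1}(a₀) ≠ g^{d+1}(a₀)`. -/
theorem stmt19 {A : Type} [Fintype A] [DecidableEq A] (a₀ : A) (d : ℕ)
    (hA : 2 ≤ Fintype.card A) (hd : d < Fintype.card A - 1)
    (Q : ℕ → (A → Option A) → Finset A)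
    (hsize : ∀ f : A → A, {x | accAnsA f Q d x ≠ none}.ncard < Fintype.card A - d - 1) :
    ∃ f g : A → A, accAnsA f Q d = accAnsA g Q d ∧ f^[d + 1] a₀ ≠ g^[d + 1] a₀ := by
  classical
  -- bound on the domain of the adversary's final answers
  have hdomcard : (Stmt19.dom a₀ Q d).card < Fintype.card A - d - 1 := by
    have hext : ∀ x v, (Stmt19.adv a₀ Q d).1 x = some v →
        (fun x => ((Stmt19.adv a₀ Q d).1 x).getD x) x = v := by
      intro x v h; simp [h]
    have hc := Stmt19.consist a₀ Q d _ hext d le_rfl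
    have hs := hsize (fun x => ((Stmt19.adv a₀ Q d).1 x).getD x)
    have heq : {x | accAnsA (fun x => ((Stmt19.adv a₀ Q d).1 x).getD x) Q d x ≠ none}
        = ↑(Stmt19.dom a₀ Q d) := by
      ext x
      rw [Set.mem_setOf_eq, hc]
      simp [Stmt19.mem_dom]
    rwa [heq, Set.ncard_coe_finset] at hs
  have hD : (Stmt19.dom a₀ Q d).card + (d + 1) < Fintype.card A := by omega
  obtain ⟨hhead, hchain, hnodup, u, hu⟩ := Stmt19.inv a₀ Q d hD d le_rfl
  obtain ⟨c, Ls, hcLs⟩ : ∃ c Ls, (Stmt19.adv a₀ Q d).2 = (c, Ls) := ⟨_, _, rfl⟩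
  have hc1 : (Stmt19.adv a₀ Q d).2.1 = c := by rw [hcLs]
  have hc2 : (Stmt19.adv a₀ Q d).2.2 = Ls := by rw [hcLs]
  rw [hc1] at hhead
  rw [hc1, hc2] at hchain hnodup hu
  have hlenm : Ls.length + 1 ≤ d + 1 := by
    have := Stmt19.len_bound a₀ Q d
    rw [hc1, hc2] at this
    simpa using this
  set m := Ls.length with hm
  have hmd : m ≤ d := by omega
  have htail : ∀ y ∈ Ls, (Stmt19.adv a₀ Q d).1 y ≠ none :=
    Stmt19.chain_tail_some Ls c hchain
  -- the pool of fresh elements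
  set P : Finset A := (Stmt19.dom a₀ Q d ∪ (c :: Ls).toFinset)ᶜ with hPdef
  have hPcard : d + 1 ≤ P.card := by
    have hsub : Stmt19.dom a₀ Q d ∪ (c :: Ls).toFinset
        ⊆ insert c (Stmt19.dom a₀ Q d) := by
      intro x hx
      rcases Finset.mem_union.mp hx with hx | hx
      · exact Finset.mem_insert_of_mem hx
      · rcases List.mem_cons.mp (List.mem_toFinset.mp hx) with hx | hx
        · exact hx ▸ Finset.mem_insert_self _ _
        · exact Finset.mem_insert_of_mem (Stmt19.mem_dom.mpr (htail x hx))
    have h1 : (Stmt19.dom a₀ Q d ∪ (c :: Ls).toFinset).card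
        ≤ (Stmt19.dom a₀ Q d).card + 1 :=
      le_trans (Finset.card_le_card hsub) (Finset.card_insert_le _ _)
    rw [hPdef, Finset.card_compl]
    omega
  set t := d + 1 - m with ht
  set bs := P.toList.take t with hbs
  have hbslen : bs.length = t := by
    rw [hbs, List.length_take, Finset.length_toList]
    omega
  have hbsP : ∀ x ∈ bs, x ∈ P := fun x hx =>
    Finset.mem_toList.mp (List.take_subset _ _ hx)
  have hbsnd : bs.Nodup := List.Nodup.sublist (List.take_sublist _ _) (Finset.nodup_toList P)
  set rev := (c :: Ls).reverse with hrevdef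
  have hrevlen : rev.length = m + 1 := by simp [hrevdef, hm]
  set path := rev ++ bs with hpathdef
  have hplen : path.length = d + 2 := by
    rw [hpathdef, List.length_append, hrevlen, hbslen]
    omega
  have hpnodup : path.Nodup := by
    rw [hpathdef, List.nodup_append]
    refine ⟨List.nodup_reverse.mpr hnodup, hbsnd, ?_⟩
    intro x hxr y hxb hxy
    subst hxy
    have h1 : x ∈ P := hbsP x hxb
    have h2 : x ∈ (c :: Ls).toFinset := List.mem_toFinset.mpr (List.mem_reverse.mp hxr)
    rw [hPdef, Finset.mem_compl] at h1
    exact h1 (Finset.mem_union_right _ h2)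
  have hrev0 : rev = a₀ :: u.reverse := by rw [hrevdef, hu]; simp
  have hpath0 : path.getD 0 a₀ = a₀ := by rw [hpathdef, hrev0]; rfl
  -- reversed chain, indexed
  have hchain' : ∀ i, (h : i + 1 < rev.length) →
      (Stmt19.adv a₀ Q d).1 (rev[i]'(by omega)) = some (rev[i+1]'h) := by
    have h1 : List.Chain' (fun x y => (Stmt19.adv a₀ Q d).1 x = some y) rev :=
      List.isChain_reverse.mpr hchain
    intro i h
    have := List.isChain_iff_getElem.mp h1 i (by omega)
    simpa [List.get_eq_getElem] using this
  have hrevm : rev[m]'(by omega) = c := by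
    have h1 : rev[rev.length - 1]? = some c := by
      rw [← List.getLast?_eq_getElem?, hrevdef, List.getLast?_reverse]; rfl
    have h3 : rev[rev.length - 1]? = rev[m]? := by
      rw [hrevlen, Nat.add_sub_cancel]
    have h2 : rev[m]? = some (rev[m]'(by omega)) := List.getElem?_eq_getElem (by omega)
    rw [h3, h2] at h1
    exact Option.some_inj.mp h1
  -- the two functions
  set f : A → A := fun x =>
    if x ∈ path then path.getD (path.idxOf x + 1) a₀
    else ((Stmt19.adv a₀ Q d).1 x).getD x with hfdef
  have hidx : ∀ i, (h : i < path.length) → path.idxOf (path[i]'h) = i := by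
    intro i h
    have := hpnodup.idxOf_getElem i h
    simpa [List.get_eq_getElem] using this
  have hstep : ∀ i, (h : i + 1 < path.length) →
      f (path[i]'(by omega)) = path[i+1]'h := by
    intro i h
    have hmem : path[i]'(by omega) ∈ path := List.getElem_mem _
    rw [hfdef]
    simp only
    rw [if_pos hmem, hidx i (by omega), List.getD_eq_getElem _ _ h]
  have hfext : ∀ x v, (Stmt19.adv a₀ Q d).1 x = some v → f x = v := by
    intro x v hv
    by_cases hx : x ∈ path
    · rcases List.mem_append.mp (hpathdef ▸ hx) with hxr | hxb
      · obtain ⟨i, hi, hix⟩ := List.mem_iff_getElem.mp hxr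
        rw [hrevlen] at hi
        have hpi : path[i]'(by omega) = x := by
          rw [← hix]
          exact List.getElem_append_left (by omega)
        by_cases him : i = m
        · exfalso
          subst him
          have hxc : x = c := hix.symm.trans hrevm
          rw [hxc, hhead] at hv
          simp at hv
        · have him' : i < m := by omega
          have h2 := hchain' i (by omega)
          rw [hix, hv] at h2
          have h3 : f x = path[i+1]'(by omega) := by
            rw [← hpi]; exact hstep i (by omega)
          have h4 : path[i+1]'(by omega) = rev[i+1]'(by omega) :=
            List.getElem_append_left (by omega)
          rw [h3, h4, ← Option.some_inj, ← h2]
      · exfalso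
        have h1 := hbsP x hxb
        rw [hPdef, Finset.mem_compl] at h1
        exact h1 (Finset.mem_union_left _ (Stmt19.mem_dom.mpr (by rw [hv]; simp)))
    · rw [hfdef]
      simp only
      rw [if_neg hx, hv]
      rfl
  have hfit : ∀ j, j ≤ d + 1 → f^[j] a₀ = path.getD j a₀ := by
    intro j
    induction j with
    | zero => intro _; rw [Function.iterate_zero_apply, hpath0]
    | succ j ih =>
      intro hj
      rw [Function.iterate_succ_apply', ih (by omega),
        List.getD_eq_getElem _ _ (show j < path.length by omega),
        List.getD_eq_getElem _ _ (show j + 1 < path.length by omega)]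
      exact hstep j (by omega)
  set e := path.getD d a₀ with hedef
  have hed : e = path[d]'(by omega) := List.getD_eq_getElem _ _ (by omega)
  have heβ : (Stmt19.adv a₀ Q d).1 e = none := by
    rw [hed]
    by_cases hdm : d < rev.length
    · have hdm' : d = m := by omega
      have : path[d]'(by omega) = rev[d]'(by omega) :=
        List.getElem_append_left (by omega)
      rw [this]
      subst hdm'
      rw [hrevm]
      exact hhead
    · have hge : rev.length ≤ d := by omega
      have h1 : path[d]'(by omega) = bs[d - rev.length]'(by
          rw [hbslen]; omega) :=
        List.getElem_append_right hge
      have h2 : path[d]'(by omega) ∈ bs := h1 ▸ List.getElem_mem _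
      have h3 := hbsP _ h2
      rw [hPdef, Finset.mem_compl] at h3
      rw [← Option.not_isSome_iff_eq_none]
      intro hsome
      exact h3 (Finset.mem_union_left _ (Stmt19.mem_dom.mpr
        (Option.isSome_iff_ne_none.mp hsome)))
  set g := Function.update f e e with hgdef
  have hgext : ∀ x v, (Stmt19.adv a₀ Q d).1 x = some v → g x = v := by
    intro x v hv
    have hne : x ≠ e := by
      rintro rfl
      rw [heβ] at hv
      simp at hv
    rw [hgdef, Function.update_of_ne hne]
    exact hfext x v hv
  have hgit : ∀ j, j ≤ d → g^[j] a₀ = path.getD j a₀ := by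
    intro j
    induction j with
    | zero => intro _; rw [Function.iterate_zero_apply, hpath0]
    | succ j ih =>
      intro hj
      rw [Function.iterate_succ_apply', ih (by omega)]
      have hne : path.getD j a₀ ≠ e := by
        rw [hed, List.getD_eq_getElem _ _ (show j < path.length by omega)]
        intro hEq
        have := (hpnodup.getElem_inj_iff).mp hEq
        omega
      rw [hgdef, Function.update_of_ne hne]
      rw [List.getD_eq_getElem _ _ (show j < path.length by omega),
        List.getD_eq_getElem _ _ (show j + 1 < path.length by omega)]
      exact hstep j (by omega)
  refine ⟨f, g, ?_, ?_⟩
  · rw [Stmt19.consist a₀ Q d f hfext d le_rfl, Stmt19.consist a₀ Q d g hgext d le_rfl]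
  · have hgd1 : g^[d+1] a₀ = e := by
      rw [Function.iterate_succ_apply', hgit d le_rfl, ← hedef, hgdef,
        Function.update_self]
    rw [hfit (d+1) le_rfl, hgd1, hed,
      List.getD_eq_getElem _ _ (show d + 1 < path.length by omega)]
    intro hEq
    have := (hpnodup.getElem_inj_iff).mp hEq
    omega
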